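/- Let γ : ℝ → ℝ be a Lipschitz continuous extended class-K function (strictly monotone increasing with γ(0) = 0). Let φ : ℝ → ℝ be differentiable and satisfy φ′(t) ≥ -γ(φ(t)) for all t ≥ 0. Then for every ε > 0 and every t₀ ≥ 0 with φ(t₀) ≥ -ε, one has φ(t) ≥ -ε for all t ≥ t₀; that is, each sub-level region {s | s ≥ -ε} is forward invariant for the scalar differential inequality. -/
import Mathlib


/-- Forward invariance of the ε-enlarged super-level sets: if `γ` is a Lipschitz
extended class-K function and `φ' t ≥ -γ (φ t)` for all `t ≥ 0`, then for every
`ε > 0` and every `t₀ ≥ 0` with `φ t₀ ≥ -ε`, one has `φ t ≥ -ε` for all `t ≥ t₀`. -/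
theorem scalar_cbf_eps_invariance
    (γ : ℝ → ℝ) (K : NNReal)
    (hγ_lip : LipschitzWith K γ) (hγ_mono : StrictMono γ) (hγ0 : γ 0 = 0)
    (φ : ℝ → ℝ) (hφ : Differentiable ℝ φ)
    (hineq : ∀ t : ℝ, 0 ≤ t → deriv φ t ≥ -γ (φ t)) :
    ∀ ε : ℝ, 0 < ε → ∀ t₀ : ℝ, 0 ≤ t₀ → φ t₀ ≥ -ε →
      ∀ t : ℝ, t₀ ≤ t → φ t ≥ -ε := by
  intro ε hε t₀ ht₀ hφt₀ t ht
  by_contra hlt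
  push_neg at hlt
  set S : Set ℝ := {u | u ∈ Set.Icc t₀ t ∧ φ u ≥ -ε} with hS
  have hne : S.Nonempty := ⟨t₀, ⟨le_refl _, ht⟩, hφt₀⟩
  have hbdd : BddAbove S := ⟨t, fun u hu => hu.1.2⟩
  set s := sSup S with hs
  have hcl : IsClosed S := by
    have : S = Set.Icc t₀ t ∩ φ ⁻¹' Set.Ici (-ε) := by
      ext u; simp [hS, ge_iff_le, Set.mem_Icc]
    rw [this]
    exact isClosed_Icc.inter (isClosed_Ici.preimage hφ.continuous)
  have hsS : s ∈ S := hcl.csSup_mem hne hbdd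
  have hst₀ : t₀ ≤ s := hsS.1.1
  have hst : s ≤ t := hsS.1.2
  have hslt : s < t := lt_of_le_of_ne hst (fun heq => absurd (heq ▸ hsS.2) (not_le.mpr hlt))
  have hmono : StrictMonoOn φ (Set.Icc s t) := by
    apply strictMonoOn_of_deriv_pos (convex_Icc s t) hφ.continuous.continuousOn
    intro u hu
    rw [interior_Icc] at hu
    have hu0 : (0:ℝ) ≤ u := le_trans ht₀ (le_trans hst₀ hu.1.le)
    have hφu : φ u < -ε := by
      by_contra h
      push_neg at h
      have hmem : u ∈ S := ⟨⟨le_trans hst₀ hu.1.le, hu.2.le⟩, h⟩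
      exact absurd (le_csSup hbdd hmem) (not_le.mpr hu.1)
    have hγneg : γ (φ u) < 0 := hγ0 ▸ hγ_mono (lt_of_lt_of_le hφu (by linarith))
    linarith [hineq u hu0]
  have := hmono (Set.left_mem_Icc.mpr hst) (Set.right_mem_Icc.mpr hst) hslt
  have := hsS.2
  linarith
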